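/- arXiv:2408.13027 — 2 statements merged into one kernel-verified Lean document; each statement's English description precedes it below -/
import Mathlib

section
/- Let f be a nonzero polynomial in n variables of total degree d over an integral domain K, and let S be a finite nonempty subset of K. If r₁, …, r_n are chosen independently and uniformly at random from S, then the probability that f(r₁,…,r_n) = 0 is at most d / |S|. Equivalently, the number of tuples (r₁,…,r_n) ∈ Sⁿ with f(r₁,…,r_n) = 0 is at most d · |S|^{n-1}. -/
open MvPolynomial Finset in
open scoped Classical in
/-- Auxiliary multiplicative form of Schwartz–Zippel, proved by induction on `n`. -/
lemma schwartz_zippel_mul (K : Type*) [CommRing K] [IsDomain K] :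
    ∀ (n : ℕ) (f : MvPolynomial (Fin n) K), f ≠ 0 → ∀ (S : Finset K),
    ((Fintype.piFinset fun _ : Fin n => S).filter
        (fun r => MvPolynomial.eval r f = 0)).card * S.card
      ≤ f.totalDegree * S.card ^ n := by
  intro n
  induction n with
  | zero =>
      intro f hf S
      have hempty : ((Fintype.piFinset fun _ : Fin 0 => S).filter
          (fun r => MvPolynomial.eval r f = 0)) = ∅ := by
        rw [Finset.filter_eq_empty_iff]
        intro r _
        have hr : r = (isEmptyElim : Fin 0 → K) := funext fun i => i.elim0
        rw [hr]
        show aeval (isEmptyElim : Fin 0 → K) f ≠ 0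
        have : Function.Injective (aeval (isEmptyElim : Fin 0 → K) :
            MvPolynomial (Fin 0) K →ₐ[K] K) := aeval_injective_iff_of_isEmpty.2 (fun a b h => h)
        intro h
        exact hf (this (by simpa using h))
      rw [hempty]
      simp
  | succ n ih =>
      intro f hf S
      set d := f.totalDegree with hd
      set g := finSuccEquiv K n f with hg
      have hg0 : g ≠ 0 := by
        simpa [hg] using (EmbeddingLike.map_ne_zero_iff (f := finSuccEquiv K n)).2 hf
      set k := g.natDegree with hk
      set lead := g.coeff k with hlead
      have hlead0 : lead ≠ 0 := by
        simpa [hlead, hk] using Polynomial.leadingCoeff_ne_zero.2 hg0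
      -- `k ≤ d`
      have hkd : k ≤ d := by
        rw [hk, hg, natDegree_finSuccEquiv]
        exact degreeOf_le_totalDegree f 0
      -- total degree of the leading coefficient
      have hleaddeg : lead.totalDegree ≤ d - k :=
        Nat.le_sub_of_add_le (totalDegree_coeff_finSuccEquiv_add_le f k hlead0)
      -- zeros of `lead` among tails
      set Z := ((Fintype.piFinset fun _ : Fin n => S).filter
          (fun s => MvPolynomial.eval s lead = 0)).card with hZ
      have hZbound : Z * S.card ≤ (d - k) * S.card ^ n :=
        le_trans (ih lead hlead0 S)
          (Nat.mul_le_mul_right _ hleaddeg)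
      -- fiberwise counting over tails
      set A := ((Fintype.piFinset fun _ : Fin (n + 1) => S).filter
          (fun r => MvPolynomial.eval r f = 0)) with hA
      have hmaps : ∀ r ∈ A, Fin.tail r ∈ (Fintype.piFinset fun _ : Fin n => S) := by
        intro r hr
        rw [hA, Finset.mem_filter] at hr
        rw [Fintype.mem_piFinset]
        intro i
        exact Fintype.mem_piFinset.1 hr.1 _
      have hcard := Finset.card_eq_sum_card_fiberwise hmaps
      -- bound each fiber
      have hfiber : ∀ s ∈ (Fintype.piFinset fun _ : Fin n => S),
          (A.filter (fun r => Fin.tail r = s)).card ≤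
            if MvPolynomial.eval s lead = 0 then S.card else k := by
        intro s hs
        split_ifs with hsl
        · -- fiber injects into S via head
          apply Finset.card_le_card_of_injOn (fun r => r 0)
          · intro r hr
            rw [Finset.mem_coe, Finset.mem_filter, hA, Finset.mem_filter] at hr
            exact Fintype.mem_piFinset.1 hr.1.1 0
          · intro r hr r' hr' h0
            simp only [Finset.mem_coe, Finset.mem_filter] at hr hr'
            funext i
            refine Fin.cases ?_ ?_ i
            · exact h0
            · intro j
              have := congrFun (hr.2.trans hr'.2.symm) j
              simpa [Fin.tail] using this
        · -- fiber injects into the roots of the univariate polynomial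
          set q := Polynomial.map (MvPolynomial.eval s) g with hq
          have hq0 : q ≠ 0 := fun h => hsl (by
            have : q.coeff k = 0 := by rw [h]; simp
            simpa [hq, Polynomial.coeff_map, hlead] using this)
          have hqd : q.natDegree ≤ k := Polynomial.natDegree_map_le
          calc (A.filter (fun r => Fin.tail r = s)).card
              ≤ q.roots.toFinset.card := by
                apply Finset.card_le_card_of_injOn (fun r => r 0)
                · intro r hr
                  rw [Finset.mem_coe, Finset.mem_filter, hA, Finset.mem_filter] at hr
                  obtain ⟨⟨_, hre⟩, hrt⟩ := hr
                  rw [Finset.mem_coe, Multiset.mem_toFinset, Polynomial.mem_roots hq0]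
                  have hr' : r = Fin.cons (r 0) s := by
                    funext i
                    refine Fin.cases rfl (fun j => ?_) i
                    rw [Fin.cons_succ, ← hrt]; rfl
                  rw [hr'] at hre
                  rw [eval_eq_eval_mv_eval'] at hre
                  exact hre
                · intro r hr r' hr' h0
                  simp only [Finset.mem_coe, Finset.mem_filter] at hr hr'
                  funext i
                  refine Fin.cases h0 (fun j => ?_) i
                  have := congrFun (hr.2.trans hr'.2.symm) j
                  simpa [Fin.tail] using this
            _ ≤ Multiset.card q.roots := q.roots.toFinset_card_le
            _ ≤ q.natDegree := q.card_roots'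
            _ ≤ k := hqd
      -- sum the fiberwise bounds
      have hTcard : (Fintype.piFinset fun _ : Fin n => S).card = S.card ^ n := by
        rw [Fintype.card_piFinset]
        simp
      have hsum : A.card ≤ Z * S.card + k * S.card ^ n := by
        rw [hcard]
        calc ∑ s ∈ (Fintype.piFinset fun _ : Fin n => S),
              (A.filter (fun r => Fin.tail r = s)).card
            ≤ ∑ s ∈ (Fintype.piFinset fun _ : Fin n => S),
              ((if MvPolynomial.eval s lead = 0 then S.card else 0) + k) := by
              refine Finset.sum_le_sum fun s hs => ?_
              refine (hfiber s hs).trans ?_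
              split_ifs <;> omega
          _ = Z * S.card + k * S.card ^ n := by
              rw [Finset.sum_add_distrib, Finset.sum_const, hTcard, ← Finset.sum_filter,
                Finset.sum_const, hZ]
              simp [mul_comm, smul_eq_mul]
      calc A.card * S.card
          ≤ (Z * S.card + k * S.card ^ n) * S.card := Nat.mul_le_mul_right _ hsum
        _ = Z * S.card * S.card + k * S.card ^ (n + 1) := by ring
        _ ≤ (d - k) * S.card ^ n * S.card + k * S.card ^ (n + 1) := by
            exact Nat.add_le_add_right (Nat.mul_le_mul_right _ hZbound) _
        _ = ((d - k) + k) * S.card ^ (n + 1) := by ring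
        _ = d * S.card ^ (n + 1) := by rw [Nat.sub_add_cancel hkd]

open scoped Classical in
/-- Polynomial Identity Lemma (Schwartz–Zippel), counting version: a nonzero
polynomial of total degree `d` over an integral domain has at most `d * |S|^(n-1)`
zeros in `Sⁿ`. -/
theorem schwartz_zippel (K : Type*) [CommRing K] [IsDomain K] (n : ℕ)
    (f : MvPolynomial (Fin n) K) (hf : f ≠ 0) (S : Finset K) (hS : S.Nonempty) :
    ((Fintype.piFinset fun _ : Fin n => S).filter
        (fun r => MvPolynomial.eval r f = 0)).card
      ≤ f.totalDegree * S.card ^ (n - 1) := by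
  have hmul := schwartz_zippel_mul K n f hf S
  have hSpos : 0 < S.card := Finset.card_pos.2 hS
  cases n with
  | zero =>
      calc ((Fintype.piFinset fun _ : Fin 0 => S).filter
          (fun r => MvPolynomial.eval r f = 0)).card
          ≤ _ * S.card := Nat.le_mul_of_pos_right _ hSpos
        _ ≤ f.totalDegree * S.card ^ 0 := hmul
        _ = f.totalDegree * S.card ^ (0 - 1) := rfl
  | succ m =>
      have : f.totalDegree * S.card ^ (m + 1) =
          (f.totalDegree * S.card ^ m) * S.card := by ring
      rw [this] at hmul
      exact Nat.le_of_mul_le_mul_right hmul hSpos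
end

section
/- Let L be an infinite field of characteristic zero and let α, β be algebraic over L of degrees ℓ and m respectively. Then there exists an integer c with 1 ≤ c ≤ ℓ²m² + 1 such that α + c·β is a primitive element for L(α, β), i.e., L(α + c·β) = L(α, β). -/
open Field Polynomial IntermediateField

/-- Parameterized version of mathlib's `Field.primitive_element_inf_aux`: any `c` avoiding
the finitely many "bad" quotients of differences of conjugates works. -/
theorem my_primitive_element_aux {F : Type*} [Field F] {E : Type*} [Field E] [Algebra F E]
    [Algebra.IsSeparable F E] (α β : E) (c : F)
    (hc : ∀ α' ∈ ((minpoly F α).map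
        ((algebraMap E ((minpoly F β).map (algebraMap F E)).SplittingField).comp
          (algebraMap F E))).roots,
      ∀ β' ∈ ((minpoly F β).map
        ((algebraMap E ((minpoly F β).map (algebraMap F E)).SplittingField).comp
          (algebraMap F E))).roots,
      -(α' - algebraMap E _ α) / (β' - algebraMap E _ β)
        ≠ (algebraMap E ((minpoly F β).map (algebraMap F E)).SplittingField)
            ((algebraMap F E) c)) :
    F⟮α, β⟯ = F⟮α + c • β⟯ := by
  classical
  have hα := Algebra.IsSeparable.isIntegral F α
  have hβ := Algebra.IsSeparable.isIntegral F β
  set f := minpoly F α with hf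
  set g := minpoly F β with hg
  set ιFE := algebraMap F E with hιFE
  set ιEE' := algebraMap E (SplittingField (g.map ιFE)) with hιEE'
  set γ := α + c • β with hγ
  suffices β_in_Fγ : β ∈ F⟮γ⟯ by
    apply le_antisymm
    · rw [adjoin_le_iff]
      have α_in_Fγ : α ∈ F⟮γ⟯ := by
        rw [← add_sub_cancel_right α (c • β)]
        exact F⟮γ⟯.sub_mem (mem_adjoin_simple_self F γ) (F⟮γ⟯.toSubalgebra.smul_mem β_in_Fγ c)
      rintro x (rfl | rfl) <;> assumption
    · rw [adjoin_simple_le_iff]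
      have α_in_Fαβ : α ∈ F⟮α, β⟯ := subset_adjoin F {α, β} (Set.mem_insert α {β})
      have β_in_Fαβ : β ∈ F⟮α, β⟯ := subset_adjoin F {α, β} (Set.mem_insert_of_mem α rfl)
      exact F⟮α, β⟯.add_mem α_in_Fαβ (F⟮α, β⟯.smul_mem β_in_Fαβ)
  let p := EuclideanDomain.gcd ((f.map (algebraMap F F⟮γ⟯)).comp
    (C (AdjoinSimple.gen F γ) - (C ↑c : F⟮γ⟯[X]) * X)) (g.map (algebraMap F F⟮γ⟯))
  let h := EuclideanDomain.gcd ((f.map ιFE).comp (C γ - C (ιFE c) * X)) (g.map ιFE)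
  have map_g_ne_zero : g.map ιFE ≠ 0 := map_ne_zero (minpoly.ne_zero hβ)
  have h_ne_zero : h ≠ 0 :=
    mt EuclideanDomain.gcd_eq_zero_iff.mp (not_and.mpr fun _ => map_g_ne_zero)
  suffices p_linear : p.map (algebraMap F⟮γ⟯ E) = C h.leadingCoeff * (X - C β) by
    have finale : β = algebraMap F⟮γ⟯ E (-p.coeff 0 / p.coeff 1) := by
      rw [map_div₀, RingHom.map_neg, ← coeff_map, ← coeff_map, p_linear]
      simp [mul_sub, coeff_C, mul_div_cancel_left₀ β (mt leadingCoeff_eq_zero.mp h_ne_zero),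
        -map_add]
    rw [finale]
    exact Subtype.mem (-p.coeff 0 / p.coeff 1)
  have h_sep : h.Separable := separable_gcd_right _ (.map (Algebra.IsSeparable.isSeparable F β))
  have h_root : h.eval β = 0 := by
    apply eval_gcd_eq_zero
    · rw [eval_comp, eval_sub, eval_mul, eval_C, eval_C, eval_X, eval_map, ← aeval_def, ←
        Algebra.smul_def, add_sub_cancel_right, hf, minpoly.aeval]
    · rw [eval_map, ← aeval_def, hg, minpoly.aeval]
  have h_splits : Splits (h.map ιEE') := by
    rw [← Polynomial.gcd_map]
    exact (SplittingField.splits _).of_dvd (map_ne_zero map_g_ne_zero)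
      (EuclideanDomain.gcd_dvd_right _ _)
  have h_roots : ∀ x ∈ (h.map ιEE').roots, x = ιEE' β := by
    intro x hx
    rw [mem_roots_map h_ne_zero] at hx
    specialize hc (ιEE' γ - ιEE' (ιFE c) * x) (by
      have f_root := root_left_of_root_gcd hx
      rw [eval₂_comp, eval₂_sub, eval₂_mul, eval₂_C, eval₂_C, eval₂_X, eval₂_map] at f_root
      exact (mem_roots_map (minpoly.ne_zero hα)).mpr f_root)
    specialize hc x (by
      rw [mem_roots_map (minpoly.ne_zero hβ), ← eval₂_map]
      exact root_right_of_root_gcd hx)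
    by_contra a
    apply hc
    apply (div_eq_iff (sub_ne_zero.mpr a)).mpr
    simp only [γ, Algebra.smul_def, RingHom.map_add, RingHom.map_mul, RingHom.comp_apply]
    ring
  rw [← eq_X_sub_C_of_separable_of_root_eq h_sep h_root h_splits h_roots]
  trans EuclideanDomain.gcd (?_ : E[X]) (?_ : E[X])
  · dsimp only [γ]
    convert (gcd_map (algebraMap F⟮γ⟯ E)).symm
  · simp only [map_comp, Polynomial.map_map, ← IsScalarTower.algebraMap_eq, Polynomial.map_sub,
      map_C, AdjoinSimple.algebraMap_gen, map_add, Polynomial.map_mul, map_X]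
    congr

/-- Quantitative primitive element theorem: over an infinite field `L` of characteristic
zero, if `α, β` are algebraic of degrees `ℓ` and `m`, then some integer
`1 ≤ c ≤ ℓ²m² + 1` makes `α + c·β` a primitive element of `L(α, β)`. -/
theorem exists_small_primitive_element (L : Type*) [Field L] [CharZero L] [Infinite L]
    (α β : AlgebraicClosure L) (ℓ m : ℕ)
    (hℓ : (minpoly L α).natDegree = ℓ) (hm : (minpoly L β).natDegree = m) :
    ∃ c : ℕ, 1 ≤ c ∧ c ≤ ℓ ^ 2 * m ^ 2 + 1 ∧
      IntermediateField.adjoin L {α + (c : AlgebraicClosure L) * β}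
        = IntermediateField.adjoin L {α, β} := by
  classical
  set E' := ((minpoly L β).map (algebraMap L (AlgebraicClosure L))).SplittingField with hE'
  set ι : L →+* E' := (algebraMap (AlgebraicClosure L) E').comp
    (algebraMap L (AlgebraicClosure L)) with hι
  haveI : CharZero E' :=
    charZero_of_injective_algebraMap (algebraMap (AlgebraicClosure L) E').injective
  have hα : IsIntegral L α := Algebra.IsIntegral.isIntegral α
  have hβ : IsIntegral L β := Algebra.IsIntegral.isIntegral β
  have hℓ1 : 1 ≤ ℓ := hℓ ▸ minpoly.natDegree_pos hα
  have hm1 : 1 ≤ m := hm ▸ minpoly.natDegree_pos hβ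
  set S : Multiset E' := (((minpoly L α).map ι).roots.bind fun α' =>
    ((minpoly L β).map ι).roots.map fun β' =>
      -(α' - algebraMap (AlgebraicClosure L) E' α) /
        (β' - algebraMap (AlgebraicClosure L) E' β)) with hS
  have hrootsα : Multiset.card (((minpoly L α).map ι).roots) ≤ ℓ := by
    calc Multiset.card (((minpoly L α).map ι).roots)
        ≤ ((minpoly L α).map ι).natDegree := Polynomial.card_roots' _
      _ = ℓ := by rw [Polynomial.natDegree_map, hℓ]
  have hrootsβ : Multiset.card (((minpoly L β).map ι).roots) ≤ m := by
    calc Multiset.card (((minpoly L β).map ι).roots)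
        ≤ ((minpoly L β).map ι).natDegree := Polynomial.card_roots' _
      _ = m := by rw [Polynomial.natDegree_map, hm]
  have hScard : S.toFinset.card ≤ ℓ * m := by
    refine le_trans S.toFinset_card_le ?_
    rw [hS, Multiset.card_bind]
    refine le_trans (Multiset.sum_le_card_nsmul _ m ?_) ?_
    · intro x hx
      simp only [Multiset.mem_map] at hx
      obtain ⟨a, _, rfl⟩ := hx
      simpa only [Function.comp_apply, Multiset.card_map] using hrootsβ
    · rw [Multiset.card_map, smul_eq_mul]
      exact Nat.mul_le_mul_right m hrootsα
  have hex : ∃ n : ℕ, n ∈ Finset.Icc 1 (ℓ ^ 2 * m ^ 2 + 1) ∧ ((n : ℕ) : E') ∉ S.toFinset := by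
    by_contra hcon
    push_neg at hcon
    have hsub : (Finset.Icc 1 (ℓ ^ 2 * m ^ 2 + 1)).image (fun n : ℕ => (n : E'))
        ⊆ S.toFinset := by
      intro x hx
      simp only [Finset.mem_image] at hx
      obtain ⟨n, hnn, rfl⟩ := hx
      exact hcon n hnn
    have hcard := Finset.card_le_card hsub
    rw [Finset.card_image_of_injective _ Nat.cast_injective, Nat.card_Icc] at hcard
    have h1 : 1 ≤ ℓ * m := Nat.one_le_iff_ne_zero.mpr (by positivity)
    have hlm : ℓ * m ≤ ℓ ^ 2 * m ^ 2 := by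
      calc ℓ * m = 1 * (ℓ * m) := (one_mul _).symm
        _ ≤ (ℓ * m) * (ℓ * m) := Nat.mul_le_mul_right _ h1
        _ = ℓ ^ 2 * m ^ 2 := by ring
    omega
  obtain ⟨n, hn, hgood⟩ := hex
  rw [Finset.mem_Icc] at hn
  refine ⟨n, hn.1, hn.2, ?_⟩
  have hc : ∀ α' ∈ ((minpoly L α).map ι).roots, ∀ β' ∈ ((minpoly L β).map ι).roots,
      -(α' - algebraMap (AlgebraicClosure L) E' α) /
          (β' - algebraMap (AlgebraicClosure L) E' β)
        ≠ (algebraMap (AlgebraicClosure L) E')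
            ((algebraMap L (AlgebraicClosure L)) ((n : ℕ) : L)) := by
    intro α' hα' β' hβ' heq
    apply hgood
    rw [Multiset.mem_toFinset, hS, Multiset.mem_bind]
    refine ⟨α', hα', ?_⟩
    rw [Multiset.mem_map]
    exact ⟨β', hβ', by rw [heq, map_natCast, map_natCast]⟩
  have key := my_primitive_element_aux (F := L) (E := AlgebraicClosure L) α β ((n : ℕ) : L) hc
  have hsmul : ((n : ℕ) : L) • β = ((n : ℕ) : AlgebraicClosure L) * β := by
    rw [Algebra.smul_def, map_natCast]
  rw [hsmul] at key
  exact key.symm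
end
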